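/- Let {D_k} be defined by D_0 = ψ_0 and D_k = (1-θ_{k-1})ψ_k + θ_{k-1}D_{k-1}, where θ_k ∈ [0, θ_max] with θ_max < 1, and suppose ψ_k ≤ D_{k-1} for all k ≥ 1 and {D_k} is bounded below. Then {D_k} converges, and lim_{k→∞} ψ_k = lim_{k→∞} D_k. -/
import Mathlib


open Filter

/-- If moreover `{D k}` is bounded below, then `{D k}` converges and
`lim ψ k = lim D k`. -/
theorem nonmonotone_term_convergence (ψ θ D : ℕ → ℝ) (θmax : ℝ)
    (hθmax : θmax < 1)
    (hθ : ∀ k, θ k ∈ Set.Icc (0 : ℝ) θmax)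
    (hD0 : D 0 = ψ 0)
    (hDk : ∀ k, D (k + 1) = (1 - θ k) * ψ (k + 1) + θ k * D k)
    (hψ : ∀ k, ψ (k + 1) ≤ D k)
    (hbdd : BddBelow (Set.range D)) :
    ∃ l : ℝ, Tendsto D atTop (nhds l) ∧ Tendsto ψ atTop (nhds l) := by
  have hc : (0 : ℝ) < 1 - θmax := by linarith
  have hanti : Antitone D := by
    apply antitone_nat_of_succ_le
    intro k
    have h1 := (hθ k).1
    have h2 := (hθ k).2
    have := hψ k
    rw [hDk k]
    nlinarith
  obtain ⟨l, hl⟩ := tendsto_of_antitone hanti |>.resolve_left (by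
    intro h
    obtain ⟨b, hb⟩ := hbdd
    obtain ⟨k, hk⟩ := (h.eventually (eventually_lt_atBot b)).exists
    exact absurd (hb ⟨k, rfl⟩) (not_le.mpr hk))
  refine ⟨l, hl, ?_⟩
  -- limit of shifted D
  have hD1 : Tendsto (fun k => D (k + 1)) atTop (nhds l) :=
    (tendsto_add_atTop_iff_nat 1).mpr hl
  -- lower bound sequence
  have hlow : Tendsto (fun k => D k + (D (k + 1) - D k) / (1 - θmax)) atTop (nhds l) := by
    have : Tendsto (fun k => D k + (D (k + 1) - D k) / (1 - θmax)) atTop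
        (nhds (l + (l - l) / (1 - θmax))) :=
      hl.add ((hD1.sub hl).div_const _)
    simpa using this
  have hψ1 : Tendsto (fun k => ψ (k + 1)) atTop (nhds l) := by
    apply tendsto_of_tendsto_of_tendsto_of_le_of_le hlow hl
    · intro k
      have h1 := (hθ k).1
      have h2 := (hθ k).2
      have h3 := hψ k
      have hk1 : D (k + 1) = (1 - θ k) * ψ (k + 1) + θ k * D k := hDk k
      have key : (D (k + 1) - D k) / (1 - θmax) ≤ ψ (k + 1) - D k := by
        rw [div_le_iff₀ hc]; nlinarith
      show D k + (D (k + 1) - D k) / (1 - θmax) ≤ ψ (k + 1)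
      linarith
    · intro k
      exact hψ k
  exact (tendsto_add_atTop_iff_nat 1).mp hψ1
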